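/- Let n₁, …, n_s ≥ 1 be integers with p = n₁ + ⋯ + n_s, let M = diag(N_{n₁}, …, N_{n_s}) be the p×p block-diagonal matrix of nilpotent Jordan blocks (ones on each block's superdiagonal), and set n_max := max_ℓ n_ℓ. Let λ ∈ ℂ, m ≥ 1 an integer, and R a p×p real matrix with nonnegative entries. Define β_i^{(k)} for 0 ≤ i ≤ n_max−1 and 1 ≤ k ≤ m by β_0^{(1)} := λ−1, β_1^{(1)} := 1 (when n_max ≥ 2), β_i^{(1)} := 0 for i ≥ 2, and β_0^{(k+1)} := (λ−k−1)·β_0^{(k)}, β_i^{(k+1)} := (λ−k−1)·β_i^{(k)} + β_{i−1}^{(k)} for i ≥ 1; let D_k := ∑_{i=0}^{n_max−1} β_i^{(k)}·M^i. Let rr be the 1×p row vector with rr_j := max_i R_{ij} and 1_p the all-ones column vector. For each ℓ and k, let R^{(ℓ)} be the columns of R in block ℓ, rc^{(ℓ)} ∈ ℝ^p with rc^{(ℓ)}_i := max_j (R^{(ℓ)})_{ij}, w^{(k,ℓ)} the 1×n_ℓ row vector whose j-th entry is ∑_{i=0}^{j−1}|β_i^{(k)}|, and 𝖰_k := [rc^{(1)}·w^{(k,1)},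 …, rc^{(s)}·w^{(k,s)}]. Define 𝖲₁ := R and 𝖲_{k+1} := 𝖰_k + |λ−k−1|·𝖲_k + M·𝖲_k + (1_p·rr)·𝖲_k for k = 1, …, m−1. Then for any p×p complex matrices B₁, …, B_m with |B_i − ((λ−i)·I_p + M)| ≤ R entrywise for all i, one has | B_m·B_{m−1}·⋯·B₁ − D_m | ≤ 𝖲_m entrywise. -/

import Mathlib

/-- The block-diagonal matrix of nilpotent Jordan blocks (real version). -/
def jordanDiagR {s : ℕ} (n : Fin s → ℕ) :
    Matrix ((ℓ : Fin s) × Fin (n ℓ)) ((ℓ : Fin s) × Fin (n ℓ)) ℝ :=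
  Matrix.of fun a b => if a.1 = b.1 ∧ (b.2 : ℕ) = (a.2 : ℕ) + 1 then 1 else 0

/-- The block-diagonal matrix of nilpotent Jordan blocks (complex version). -/
def jordanDiagC {s : ℕ} (n : Fin s → ℕ) :
    Matrix ((ℓ : Fin s) × Fin (n ℓ)) ((ℓ : Fin s) × Fin (n ℓ)) ℂ :=
  Matrix.of fun a b => if a.1 = b.1 ∧ (b.2 : ℕ) = (a.2 : ℕ) + 1 then 1 else 0

/-- `betaD lam k i` is the coefficient β_i^{(k)} (descending version):
β_0^{(1)} = λ−1, β_1^{(1)} = 1, β_i^{(1)} = 0 for i ≥ 2, and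
β_0^{(k+1)} = (λ−k−1)β_0^{(k)}, β_i^{(k+1)} = (λ−k−1)β_i^{(k)} + β_{i−1}^{(k)} for i ≥ 1. -/
noncomputable def betaD (lam : ℂ) : ℕ → ℕ → ℂ
  | 0 => fun _ => 0
  | 1 => fun i => if i = 0 then lam - 1 else if i = 1 then 1 else 0
  | (k + 2) => fun i =>
      (lam - (k + 1) - 1) * betaD lam (k + 1) i +
        if i = 0 then 0 else betaD lam (k + 1) (i - 1)

/-- The matrix `𝖰_k` built from the coefficients `betaD lam k`. -/
noncomputable def QmatD {s : ℕ} (n : Fin s → ℕ) (lam : ℂ)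
    (R : Matrix ((ℓ : Fin s) × Fin (n ℓ)) ((ℓ : Fin s) × Fin (n ℓ)) ℝ) (k : ℕ) :
    Matrix ((ℓ : Fin s) × Fin (n ℓ)) ((ℓ : Fin s) × Fin (n ℓ)) ℝ :=
  Matrix.of fun i j => (⨆ a : Fin (n j.1), R i ⟨j.1, a⟩) *
    ∑ t ∈ Finset.range ((j.2 : ℕ) + 1), norm (betaD lam k t)

/-- The matrix `1_p · rr`, where `rr_j = max_i R_{ij}`. -/
noncomputable def colMaxMat {ι : Type*} [Fintype ι] (R : Matrix ι ι ℝ) : Matrix ι ι ℝ :=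
  Matrix.of fun _ j => ⨆ i, R i j

/-- The radius sequence 𝖲₁ := R,
`𝖲_{k+1} := 𝖰_k + |λ−k−1|·𝖲_k + M·𝖲_k + (1_p·rr)·𝖲_k` for k ≥ 1. -/
noncomputable def SseqJ {s : ℕ} (n : Fin s → ℕ) (lam : ℂ)
    (R : Matrix ((ℓ : Fin s) × Fin (n ℓ)) ((ℓ : Fin s) × Fin (n ℓ)) ℝ) :
    ℕ → Matrix ((ℓ : Fin s) × Fin (n ℓ)) ((ℓ : Fin s) × Fin (n ℓ)) ℝ
  | 0 => R
  | 1 => R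
  | (k + 2) => QmatD n lam R (k + 1) +
      norm (lam - (k + 1) - 1) • SseqJ n lam R (k + 1) +
      jordanDiagR n * SseqJ n lam R (k + 1) + colMaxMat R * SseqJ n lam R (k + 1)

lemma jordan_pow_apply {s : ℕ} (n : Fin s → ℕ) (t : ℕ) (a b : (ℓ : Fin s) × Fin (n ℓ)) :
    (jordanDiagC n ^ t) a b = if a.1 = b.1 ∧ (b.2 : ℕ) = (a.2 : ℕ) + t then 1 else 0 := by
  induction t generalizing b with
  | zero =>
    rw [pow_zero, Matrix.one_apply]
    obtain ⟨al, aa⟩ := a; obtain ⟨bl, ba⟩ := b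
    by_cases h : al = bl
    · subst h
      simp [Sigma.ext_iff, Fin.ext_iff, eq_comm]
    · simp [Sigma.ext_iff, h]
  | succ t ih =>
    rw [pow_succ, Matrix.mul_apply]
    by_cases hc : a.1 = b.1 ∧ (b.2 : ℕ) = (a.2 : ℕ) + (t + 1)
    · obtain ⟨h1, h2⟩ := hc
      have hb : ((b.2 : ℕ)) < n a.1 := by rw [h1]; exact b.2.isLt
      have hlt : (a.2 : ℕ) + t < n a.1 := by omega
      rw [Finset.sum_eq_single (⟨a.1, ⟨(a.2 : ℕ) + t, hlt⟩⟩ : (ℓ : Fin s) × Fin (n ℓ))]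
      · rw [ih, if_pos ⟨rfl, rfl⟩, jordanDiagC]
        simp only [Matrix.of_apply]
        rw [if_pos ⟨h1, h2⟩, if_pos ⟨h1, h2⟩, one_mul]
      · intro c _ hne
        rw [ih]
        by_cases h : a.1 = c.1 ∧ (c.2 : ℕ) = (a.2 : ℕ) + t
        · exfalso; apply hne
          obtain ⟨g1, g2⟩ := h
          obtain ⟨cl, ca⟩ := c
          simp only at g1 g2
          subst g1
          simp [Sigma.ext_iff, Fin.ext_iff, g2]
        · rw [if_neg h, zero_mul]
      · intro h; exact absurd (Finset.mem_univ _) h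
    · rw [if_neg hc]
      apply Finset.sum_eq_zero
      intro c _
      rw [ih, jordanDiagC]
      simp only [Matrix.of_apply]
      by_cases h : a.1 = c.1 ∧ (c.2 : ℕ) = (a.2 : ℕ) + t
      · rw [if_pos h, one_mul]
        rw [if_neg]
        rintro ⟨g1, g2⟩
        exact hc ⟨h.1.trans g1, by omega⟩
      · rw [if_neg h, zero_mul]

lemma jordan_pow_top {s : ℕ} (n : Fin s → ℕ) :
    jordanDiagC n ^ (Finset.univ.sup n) = 0 := by
  ext a b
  rw [jordan_pow_apply, Matrix.zero_apply, if_neg]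
  rintro ⟨h1, h2⟩
  have hb := b.2.isLt
  have hsup : n b.1 ≤ Finset.univ.sup n := Finset.le_sup (Finset.mem_univ b.1)
  omega

noncomputable def Dmat {s : ℕ} (n : Fin s → ℕ) (lam : ℂ) (k : ℕ) :
    Matrix ((ℓ : Fin s) × Fin (n ℓ)) ((ℓ : Fin s) × Fin (n ℓ)) ℂ :=
  ∑ i ∈ Finset.range (Finset.univ.sup n), betaD lam k i • jordanDiagC n ^ i

lemma Dmat_apply {s : ℕ} (n : Fin s → ℕ) (lam : ℂ) (k : ℕ)
    (a b : (ℓ : Fin s) × Fin (n ℓ)) :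
    Dmat n lam k a b =
      if a.1 = b.1 ∧ (a.2 : ℕ) ≤ (b.2 : ℕ) then betaD lam k ((b.2 : ℕ) - (a.2 : ℕ)) else 0 := by
  rw [Dmat, Matrix.sum_apply]
  simp only [Matrix.smul_apply, jordan_pow_apply, smul_eq_mul]
  by_cases h : a.1 = b.1 ∧ (a.2 : ℕ) ≤ (b.2 : ℕ)
  · rw [if_pos h]
    obtain ⟨h1, h2⟩ := h
    have hb : ((b.2 : ℕ)) < n a.1 := by rw [h1]; exact b.2.isLt
    have hsup : n a.1 ≤ Finset.univ.sup n := Finset.le_sup (Finset.mem_univ a.1)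
    rw [Finset.sum_eq_single ((b.2 : ℕ) - (a.2 : ℕ))]
    · rw [if_pos ⟨h1, by omega⟩, mul_one]
    · intro i _ hne
      rw [if_neg, mul_zero]
      rintro ⟨g1, g2⟩
      exact hne (by omega)
    · intro hmem
      exact absurd (Finset.mem_range.mpr (by omega)) hmem
  · rw [if_neg h]
    apply Finset.sum_eq_zero
    intro i _
    rw [if_neg, mul_zero]
    rintro ⟨g1, g2⟩
    exact h ⟨g1, by omega⟩

lemma Dmat_rec {s : ℕ} (n : Fin s → ℕ) (lam : ℂ) (k : ℕ) :
    Dmat n lam (k + 2) =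
      (lam - ((k : ℂ) + 1) - 1) • Dmat n lam (k + 1) + jordanDiagC n * Dmat n lam (k + 1) := by
  have hmul : jordanDiagC n * Dmat n lam (k + 1) =
      ∑ i ∈ Finset.range (Finset.univ.sup n),
        (if i = 0 then (0 : ℂ) else betaD lam (k + 1) (i - 1)) • jordanDiagC n ^ i := by
    set N := Finset.univ.sup n with hN
    have h2 : ∑ i ∈ Finset.range (N + 1),
        (if i = 0 then (0 : ℂ) else betaD lam (k + 1) (i - 1)) • jordanDiagC n ^ i
        = (∑ i ∈ Finset.range N,
            (if i + 1 = 0 then (0 : ℂ) else betaD lam (k + 1) (i + 1 - 1)) • jordanDiagC n ^ (i + 1))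
          + (if 0 = 0 then (0 : ℂ) else betaD lam (k + 1) (0 - 1)) • jordanDiagC n ^ 0 :=
      Finset.sum_range_succ' _ _
    have h1 : ∑ i ∈ Finset.range (N + 1),
        (if i = 0 then (0 : ℂ) else betaD lam (k + 1) (i - 1)) • jordanDiagC n ^ i
        = (∑ i ∈ Finset.range N,
            (if i = 0 then (0 : ℂ) else betaD lam (k + 1) (i - 1)) • jordanDiagC n ^ i)
          + (if N = 0 then (0 : ℂ) else betaD lam (k + 1) (N - 1)) • jordanDiagC n ^ N :=
      Finset.sum_range_succ _ _
    have hzN : (if N = 0 then (0 : ℂ) else betaD lam (k + 1) (N - 1)) • jordanDiagC n ^ N = 0 := by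
      by_cases hN0 : N = 0
      · rw [if_pos hN0, zero_smul]
      · rw [hN, jordan_pow_top, smul_zero]
    rw [Dmat, Finset.mul_sum]
    have : ∀ i, jordanDiagC n * (betaD lam (k+1) i • jordanDiagC n ^ i)
        = betaD lam (k+1) i • jordanDiagC n ^ (i+1) := by
      intro i
      rw [Matrix.mul_smul, pow_succ']
    simp only [this]
    rw [show (∑ i ∈ Finset.range N, betaD lam (k+1) i • jordanDiagC n ^ (i+1))
        = ∑ i ∈ Finset.range N,
            (if i + 1 = 0 then (0 : ℂ) else betaD lam (k + 1) (i + 1 - 1)) • jordanDiagC n ^ (i + 1)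
      from Finset.sum_congr rfl (by intro i _; simp)]
    rw [← add_zero (∑ i ∈ Finset.range N, _), show (0 : Matrix _ _ ℂ) =
      (if 0 = 0 then (0 : ℂ) else betaD lam (k + 1) (0 - 1)) • jordanDiagC n ^ 0 by simp]
    rw [← h2, h1, hzN, add_zero]
  rw [hmul, Dmat, Dmat]
  rw [Finset.smul_sum, ← Finset.sum_add_distrib]
  apply Finset.sum_congr rfl
  intro i _
  rw [show betaD lam (k + 2) i = (lam - ((k : ℂ) + 1) - 1) * betaD lam (k + 1) i +
      (if i = 0 then 0 else betaD lam (k + 1) (i - 1)) by simp [betaD]]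
  rw [add_smul, mul_smul]

lemma Dmat_one {s : ℕ} (n : Fin s → ℕ) (lam : ℂ) :
    Dmat n lam 1 = (lam - 1) • (1 : Matrix _ _ ℂ) + jordanDiagC n := by
  ext a b
  rw [Dmat_apply, Matrix.add_apply, Matrix.smul_apply, Matrix.one_apply, jordanDiagC]
  obtain ⟨al, aa⟩ := a; obtain ⟨bl, ba⟩ := b
  simp only [Matrix.of_apply, smul_eq_mul]
  by_cases h : al = bl
  · subst h
    rcases Nat.lt_trichotomy (aa : ℕ) (ba : ℕ) with hlt | heq | hgt
    · rw [if_pos ⟨rfl, Nat.le_of_lt hlt⟩,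
        if_neg (show ¬(⟨al, aa⟩ : (ℓ : Fin s) × Fin (n ℓ)) = ⟨al, ba⟩ by
          simp only [Sigma.ext_iff, heq_eq_eq, true_and, Fin.ext_iff]; omega),
        mul_zero, zero_add]
      by_cases h1 : (ba : ℕ) = (aa : ℕ) + 1
      · rw [if_pos ⟨rfl, h1⟩]
        simp [betaD, show (ba : ℕ) - (aa : ℕ) = 1 by omega]
      · rw [if_neg (by rintro ⟨-, g⟩; exact h1 g)]
        simp [betaD, show ¬((ba : ℕ) - (aa : ℕ) = 0) by omega,
          show ¬((ba : ℕ) - (aa : ℕ) = 1) by omega]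
    · rw [if_pos ⟨rfl, Nat.le_of_eq heq⟩,
        if_pos (show (⟨al, aa⟩ : (ℓ : Fin s) × Fin (n ℓ)) = ⟨al, ba⟩ by
          simp only [Sigma.ext_iff, heq_eq_eq, true_and, Fin.ext_iff]; omega),
        if_neg (by rintro ⟨-, g⟩; omega), mul_one, add_zero]
      simp [betaD, show (ba : ℕ) - (aa : ℕ) = 0 by omega]
    · rw [if_neg (by rintro ⟨-, g⟩; omega),
        if_neg (show ¬(⟨al, aa⟩ : (ℓ : Fin s) × Fin (n ℓ)) = ⟨al, ba⟩ by
          simp only [Sigma.ext_iff, heq_eq_eq, true_and, Fin.ext_iff]; omega),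
        if_neg (by rintro ⟨-, g⟩; omega), mul_zero, add_zero]
  · rw [if_neg (by rintro ⟨g, -⟩; exact h g),
      if_neg (show ¬(⟨al, aa⟩ : (ℓ : Fin s) × Fin (n ℓ)) = ⟨bl, ba⟩ by
        simp only [Sigma.ext_iff]; rintro ⟨g, -⟩; exact h g),
      if_neg (by rintro ⟨g, -⟩; exact h g), mul_zero, add_zero]

section

variable {s : ℕ} {n : Fin s → ℕ}
  {R : Matrix ((ℓ : Fin s) × Fin (n ℓ)) ((ℓ : Fin s) × Fin (n ℓ)) ℝ}

lemma jordanDiagR_nonneg (a b : (ℓ : Fin s) × Fin (n ℓ)) : 0 ≤ jordanDiagR n a b := by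
  rw [jordanDiagR]; simp only [Matrix.of_apply]; split_ifs <;> norm_num

lemma abs_jordanDiagC (a b : (ℓ : Fin s) × Fin (n ℓ)) :
    norm (jordanDiagC n a b) = jordanDiagR n a b := by
  rw [jordanDiagR, jordanDiagC]; simp only [Matrix.of_apply]; split_ifs <;> simp

lemma colMaxMat_nonneg (hR : ∀ i j, 0 ≤ R i j) (a b : (ℓ : Fin s) × Fin (n ℓ)) :
    0 ≤ colMaxMat R a b := by
  rw [colMaxMat]; exact Real.iSup_nonneg fun i => hR i b

lemma le_colMaxMat (a b : (ℓ : Fin s) × Fin (n ℓ)) : R a b ≤ colMaxMat R a b := by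
  simp only [colMaxMat, Matrix.of_apply]
  exact le_ciSup (f := fun i => R i b) (Set.Finite.bddAbove (Set.finite_range _)) a

lemma QmatD_nonneg (hR : ∀ i j, 0 ≤ R i j) (lam : ℂ) (k : ℕ)
    (a b : (ℓ : Fin s) × Fin (n ℓ)) : 0 ≤ QmatD n lam R k a b := by
  rw [QmatD]
  refine mul_nonneg (Real.iSup_nonneg fun i => hR _ _)
    (Finset.sum_nonneg fun t _ => norm_nonneg _)

lemma SseqJ_nonneg (hR : ∀ i j, 0 ≤ R i j) (lam : ℂ) (k : ℕ)
    (a b : (ℓ : Fin s) × Fin (n ℓ)) : 0 ≤ SseqJ n lam R k a b := by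
  induction k using Nat.twoStepInduction generalizing a b with
  | zero => exact hR a b
  | one => exact hR a b
  | more k _ ih =>
    rw [SseqJ]
    simp only [Matrix.add_apply, Matrix.smul_apply, smul_eq_mul]
    have h1 : 0 ≤ (jordanDiagR n * SseqJ n lam R (k + 1)) a b := by
      rw [Matrix.mul_apply]
      exact Finset.sum_nonneg fun c _ => mul_nonneg (jordanDiagR_nonneg a c) (ih c b)
    have h2 : 0 ≤ (colMaxMat R * SseqJ n lam R (k + 1)) a b := by
      rw [Matrix.mul_apply]
      exact Finset.sum_nonneg fun c _ => mul_nonneg (colMaxMat_nonneg hR a c) (ih c b)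
    have h3 := QmatD_nonneg hR lam (k + 1) a b
    have h4 : 0 ≤ norm (lam - (↑k + 1) - 1) * SseqJ n lam R (k + 1) a b :=
      mul_nonneg (norm_nonneg _) (ih a b)
    linarith

lemma sum_R_absD_le (hR : ∀ i j, 0 ≤ R i j) (lam : ℂ) (k : ℕ)
    (i j : (ℓ : Fin s) × Fin (n ℓ)) :
    ∑ c, R i c * norm (Dmat n lam k c j) ≤ QmatD n lam R k i j := by
  obtain ⟨jl, ja⟩ := j
  set A := ⨆ a : Fin (n jl), R i ⟨jl, a⟩ with hA
  have hAle : ∀ x : Fin (n jl), R i ⟨jl, x⟩ ≤ A := by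
    intro x
    rw [hA]
    exact le_ciSup (f := fun a : Fin (n jl) => R i ⟨jl, a⟩)
      (Set.Finite.bddAbove (Set.finite_range _)) x
  have hA0 : 0 ≤ A := le_trans (hR i ⟨jl, ja⟩) (hAle ja)
  have step1 : ∑ c, R i c * norm (Dmat n lam k c ⟨jl, ja⟩) ≤
      ∑ c : (ℓ : Fin s) × Fin (n ℓ), A *
        (if c.1 = jl ∧ (c.2 : ℕ) ≤ (ja : ℕ) then
          norm (betaD lam k ((ja : ℕ) - (c.2 : ℕ))) else 0) := by
    apply Finset.sum_le_sum
    intro c _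
    rw [Dmat_apply]
    obtain ⟨cl, ca⟩ := c
    by_cases h : cl = jl
    · subst h
      by_cases h2 : (ca : ℕ) ≤ (ja : ℕ)
      · rw [if_pos ⟨rfl, h2⟩, if_pos ⟨rfl, h2⟩]
        exact mul_le_mul_of_nonneg_right (hAle ca) (norm_nonneg _)
      · rw [if_neg (by rintro ⟨-, g⟩; exact h2 g), if_neg (by rintro ⟨-, g⟩; exact h2 g)]
        simp
    · rw [if_neg (by rintro ⟨g, -⟩; exact h g), if_neg (by rintro ⟨g, -⟩; exact h g)]
      simp
  refine le_trans step1 ?_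
  rw [← Finset.mul_sum]
  have hsum : ∑ c : (ℓ : Fin s) × Fin (n ℓ),
      (if c.1 = jl ∧ (c.2 : ℕ) ≤ (ja : ℕ) then
        norm (betaD lam k ((ja : ℕ) - (c.2 : ℕ))) else 0) =
      ∑ t ∈ Finset.range ((ja : ℕ) + 1), norm (betaD lam k t) := by
    rw [← Finset.univ_sigma_univ, Finset.sum_sigma]
    rw [Fintype.sum_eq_single jl]
    · have hfin : ∀ x : Fin (n jl),
          (if (⟨jl, x⟩ : (ℓ : Fin s) × Fin (n ℓ)).1 = jl ∧ ((x : ℕ)) ≤ (ja : ℕ) then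
            norm (betaD lam k ((ja : ℕ) - (x : ℕ))) else 0)
          = (fun t : ℕ => if t ≤ (ja : ℕ) then
              norm (betaD lam k ((ja : ℕ) - t)) else 0) (x : ℕ) := by
        intro x
        by_cases hx : (x : ℕ) ≤ (ja : ℕ)
        · simp [hx]
        · simp [hx]
      rw [Finset.sum_congr rfl fun x _ => hfin x,
        Fin.sum_univ_eq_sum_range (fun t => if t ≤ (ja : ℕ) then
          norm (betaD lam k ((ja : ℕ) - t)) else 0) (n jl)]
      rw [← Finset.sum_subset (Finset.range_subset_range.mpr (by exact ja.isLt))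
        (fun x _ hx => if_neg (fun hle => hx (Finset.mem_range.mpr (by omega))))]
      rw [Finset.sum_congr rfl (fun x hx => if_pos (by
        have := Finset.mem_range.mp hx; omega))]
      rw [← Finset.sum_range_reflect (fun t => norm (betaD lam k t)) ((ja : ℕ) + 1)]
      apply Finset.sum_congr rfl
      intro x hx
      congr 1
    · intro ℓ hℓ
      apply Finset.sum_eq_zero
      intro x _
      rw [if_neg (by rintro ⟨g, -⟩; exact hℓ g)]
  rw [hsum]
  exact le_of_eq rfl

end

theorem stmt_16 {s : ℕ} (hs : 1 ≤ s) (n : Fin s → ℕ) (hn : ∀ ℓ, 1 ≤ n ℓ)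
    (lam : ℂ) (m : ℕ) (hm : 1 ≤ m)
    (R : Matrix ((ℓ : Fin s) × Fin (n ℓ)) ((ℓ : Fin s) × Fin (n ℓ)) ℝ)
    (hR : ∀ i j, 0 ≤ R i j)
    (B : Fin m → Matrix ((ℓ : Fin s) × Fin (n ℓ)) ((ℓ : Fin s) × Fin (n ℓ)) ℂ)
    (hB : ∀ i : Fin m, ∀ a b, norm
      (B i a b - ((lam - ((i : ℕ) + 1)) • (1 : Matrix ((ℓ : Fin s) × Fin (n ℓ))
        ((ℓ : Fin s) × Fin (n ℓ)) ℂ) + jordanDiagC n) a b) ≤ R a b) :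
    ∀ a b, norm
        (((List.ofFn B).reverse.prod) a b -
          (∑ i ∈ Finset.range (Finset.univ.sup n),
            betaD lam m i • jordanDiagC n ^ i) a b) ≤
      SseqJ n lam R m a b := by
  classical
  have hPstep : ∀ (k : ℕ) (hk : k < m),
      ((List.ofFn B).take (k + 1)).reverse.prod
        = B ⟨k, hk⟩ * ((List.ofFn B).take k).reverse.prod := by
    intro k hk
    have hlen : k < (List.ofFn B).length := by simpa using hk
    have h1 : (List.ofFn B).take (k + 1) = (List.ofFn B).take k ++ [B ⟨k, hk⟩] := by
      rw [List.take_succ, List.getElem?_eq_getElem hlen]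
      simp
    rw [h1, List.reverse_append]
    simp
  have claim : ∀ j : ℕ, j + 1 ≤ m → ∀ a b,
      norm ((((List.ofFn B).take (j + 1)).reverse.prod - Dmat n lam (j + 1)) a b)
        ≤ SseqJ n lam R (j + 1) a b := by
    intro j
    induction j with
    | zero =>
      intro h a b
      rw [hPstep 0 h]
      have hP0 : ((List.ofFn B).take 0).reverse.prod = 1 := by simp
      rw [hP0, mul_one, Dmat_one]
      have h2 := hB ⟨0, h⟩ a b
      have hc : ((((⟨0, h⟩ : Fin m) : ℕ) : ℂ) + 1) = 1 := by norm_num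
      rw [hc] at h2
      have hS1 : SseqJ n lam R 1 = R := rfl
      rw [hS1, Matrix.sub_apply]
      exact h2
    | succ j ih =>
      intro h a b
      have hj2 : j + 1 < m := by omega
      have ihh := ih (by omega)
      set Pk := ((List.ofFn B).take (j + 1)).reverse.prod with hPk
      set F := Pk - Dmat n lam (j + 1) with hF
      set Sk := SseqJ n lam R (j + 1) with hSk
      set Δ := B ⟨j + 1, hj2⟩ - ((lam - ((j : ℂ) + 2)) • 1 + jordanDiagC n) with hΔ
      have hΔR : ∀ a b, norm (Δ a b) ≤ R a b := by
        intro a b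
        have h3 := hB ⟨j + 1, hj2⟩ a b
        have hc : (lam - ((((⟨j + 1, hj2⟩ : Fin m) : ℕ) : ℂ) + 1)) = lam - ((j : ℂ) + 2) := by
          push_cast
          ring
        rw [hc] at h3
        exact h3
      have hBsplit : B ⟨j + 1, hj2⟩ = Δ + ((lam - ((j : ℂ) + 2)) • 1 + jordanDiagC n) := by
        rw [hΔ, sub_add_cancel]
      have hco : (lam - ((j : ℂ) + 1) - 1) = lam - ((j : ℂ) + 2) := by ring
      have hrec : Dmat n lam (j + 2) =
          (lam - ((j : ℂ) + 2)) • Dmat n lam (j + 1)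
            + jordanDiagC n * Dmat n lam (j + 1) := by
        rw [Dmat_rec n lam j, hco]
      have key : ((List.ofFn B).take (j + 2)).reverse.prod - Dmat n lam (j + 2)
          = (lam - ((j : ℂ) + 2)) • F + jordanDiagC n * F + Δ * Pk := by
        rw [show j + 2 = (j + 1) + 1 from rfl, hPstep (j + 1) hj2, ← hPk, hBsplit, hrec, hF]
        rw [add_mul, add_mul, Matrix.smul_mul, one_mul, Matrix.mul_sub, smul_sub]
        abel
      rw [key]
      simp only [Matrix.add_apply, Matrix.smul_apply, smul_eq_mul]
      refine le_trans (le_trans (norm_add_le _ _)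
        (add_le_add_left (norm_add_le _ _) _)) ?_
      have b1 : norm ((lam - ((j : ℂ) + 2)) * F a b)
          ≤ norm (lam - ((j : ℂ) + 2)) * Sk a b := by
        rw [norm_mul]
        exact mul_le_mul_of_nonneg_left (ihh a b) (norm_nonneg _)
      have b2 : norm ((jordanDiagC n * F) a b) ≤ (jordanDiagR n * Sk) a b := by
        rw [Matrix.mul_apply, Matrix.mul_apply]
        refine le_trans (norm_sum_le _ _) (Finset.sum_le_sum ?_)
        intro c _
        rw [norm_mul, abs_jordanDiagC]
        exact mul_le_mul_of_nonneg_left (ihh c b) (jordanDiagR_nonneg a c)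
      have b3 : norm ((Δ * Pk) a b)
          ≤ QmatD n lam R (j + 1) a b + (colMaxMat R * Sk) a b := by
        rw [Matrix.mul_apply]
        refine le_trans (norm_sum_le _ _) ?_
        have hterm : ∀ c, norm (Δ a c * Pk c b)
            ≤ R a c * norm (Dmat n lam (j + 1) c b) + R a c * Sk c b := by
          intro c
          rw [norm_mul, ← mul_add]
          refine mul_le_mul (hΔR a c) ?_ (norm_nonneg _) (hR a c)
          have hP : Pk c b = Dmat n lam (j + 1) c b + F c b := by
            rw [hF, Matrix.sub_apply]
            ring
          rw [hP]
          exact le_trans (norm_add_le _ _) (add_le_add_right (ihh c b) _)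
        refine le_trans (Finset.sum_le_sum fun c _ => hterm c) ?_
        rw [Finset.sum_add_distrib]
        refine add_le_add (sum_R_absD_le hR lam (j + 1) a b) ?_
        rw [Matrix.mul_apply]
        refine Finset.sum_le_sum fun c _ => ?_
        exact mul_le_mul_of_nonneg_right (le_colMaxMat a c) (SseqJ_nonneg hR lam (j + 1) c b)
      have hfinal : SseqJ n lam R (j + 2) a b
          = QmatD n lam R (j + 1) a b + norm (lam - ((j : ℂ) + 1) - 1) * Sk a b
            + (jordanDiagR n * Sk) a b + (colMaxMat R * Sk) a b := by
        rw [show SseqJ n lam R (j + 2) = QmatD n lam R (j + 1) +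
            norm (lam - ((j : ℂ) + 1) - 1) • SseqJ n lam R (j + 1) +
            jordanDiagR n * SseqJ n lam R (j + 1) + colMaxMat R * SseqJ n lam R (j + 1)
          from rfl]
        simp only [Matrix.add_apply, Matrix.smul_apply, smul_eq_mul, hSk]
      rw [hfinal, hco]
      linarith
  intro a b
  obtain ⟨m', rfl⟩ : ∃ m', m = m' + 1 := ⟨m - 1, by omega⟩
  have hcl := claim m' le_rfl a b
  rw [List.take_of_length_le (by simp)] at hcl
  have hD : Dmat n lam (m' + 1)
      = ∑ i ∈ Finset.range (Finset.univ.sup n), betaD lam (m' + 1) i • jordanDiagC n ^ i := rfl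
  rw [Matrix.sub_apply, hD] at hcl
  exact hcl
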